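/- arXiv:2103.08015 — 13 statements merged into one kernel-verified Lean document; each statement's English description precedes it below -/
import Mathlib

section
/- For every integer n ≥ 1 and every real (or polynomial variable) x, the Fibonacci polynomials F_n(x) and Chebyshev polynomials of the first kind T_n(x) satisfy F_n(x) = T_{n-1}(x) − Σ_{k=1}^{n-2} (x·T_{n-1-k}(x) − 2·T_{n-2-k}(x))·F_k(x). -/
/-- Chebyshev polynomials of the first kind. -/
def T : ℕ → ℝ → ℝ
  | 0, _ => 1
  | 1, x => x
  | (n+2), x => 2*x*T (n+1) x - T n x

/-- Chebyshev polynomials of the second kind. -/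
def U : ℕ → ℝ → ℝ
  | 0, _ => 1
  | 1, x => 2*x
  | (n+2), x => 2*x*U (n+1) x - U n x

/-- Fibonacci polynomials. -/
def F : ℕ → ℝ → ℝ
  | 0, _ => 0
  | 1, _ => 1
  | (n+2), x => x*F (n+1) x + F n x

/-- Balancing polynomials. -/
def B : ℕ → ℝ → ℝ
  | 0, _ => 0
  | 1, _ => 1
  | (n+2), x => 6*x*B (n+1) x - B n x

/-- Lucas-balancing polynomials. -/
def C : ℕ → ℝ → ℝ
  | 0, _ => 1
  | 1, x => 3*x
  | (n+2), x => 6*x*C (n+1) x - C n x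

/-- Lucas numbers. -/
def lucas : ℕ → ℤ
  | 0 => 2
  | 1 => 1
  | (n+2) => lucas (n+1) + lucas n

theorem fib_eq_cheb (m : ℕ) (x : ℝ) :
    F (m+2) x = T (m+1) x - ∑ k ∈ Finset.Icc 1 m, (x * T (m+1-k) x - 2 * T (m-k) x) * F k x := by
  induction m using Nat.twoStepInduction with
  | zero => simp [F, T]
  | one =>
    rw [show Finset.Icc 1 1 = {1} from rfl]
    simp [F, T]; ring
  | more m ih1 ih2 =>
    have h1 : ∑ k ∈ Finset.Icc 1 (m+2), (x * T (m+2+1-k) x - 2 * T (m+2-k) x) * F k x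
        = (∑ k ∈ Finset.Icc 1 m, (x * T (m+3-k) x - 2 * T (m+2-k) x) * F k x)
          + (x * T 2 x - 2 * T 1 x) * F (m+1) x + (x * T 1 x - 2 * T 0 x) * F (m+2) x := by
      rw [show m+2 = (m+1)+1 from rfl, Finset.sum_Icc_succ_top (by omega),
        Finset.sum_Icc_succ_top (by omega)]
      have e1 : m+1+1+1-(m+1) = 2 := by omega
      have e2 : m+1+1-(m+1) = 1 := by omega
      have e3 : m+1+1+1-(m+1+1) = 1 := by omega
      have e4 : m+1+1-(m+1+1) = 0 := by omega
      rw [e1, e2, e3, e4]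
    have h2 : ∑ k ∈ Finset.Icc 1 m, (x * T (m+3-k) x - 2 * T (m+2-k) x) * F k x
        = ∑ k ∈ Finset.Icc 1 m,
            (2*x*((x * T (m+2-k) x - 2 * T (m+1-k) x) * F k x)
              - (x * T (m+1-k) x - 2 * T (m-k) x) * F k x) := by
      refine Finset.sum_congr rfl (fun k hk => ?_)
      simp only [Finset.mem_Icc] at hk
      have e1 : m+3-k = (m-k)+3 := by omega
      have e2 : m+2-k = (m-k)+2 := by omega
      have e3 : m+1-k = (m-k)+1 := by omega
      rw [e1, e2, e3]
      have t3 : T ((m-k)+3) x = 2*x*T ((m-k)+2) x - T ((m-k)+1) x := rfl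
      have t2 : T ((m-k)+2) x = 2*x*T ((m-k)+1) x - T (m-k) x := rfl
      rw [t3, t2]; ring
    have h3 : ∑ k ∈ Finset.Icc 1 (m+1), (x * T (m+1+1-k) x - 2 * T (m+1-k) x) * F k x
        = (∑ k ∈ Finset.Icc 1 m, (x * T (m+2-k) x - 2 * T (m+1-k) x) * F k x)
          + (x * T 1 x - 2 * T 0 x) * F (m+1) x := by
      rw [Finset.sum_Icc_succ_top (by omega)]
      have e1 : m+1+1-(m+1) = 1 := by omega
      have e2 : m+1-(m+1) = 0 := by omega
      rw [e1, e2]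
    rw [h1, h2, Finset.sum_sub_distrib, ← Finset.mul_sum]
    rw [h3] at ih2
    have hF4 : F (m+2+2) x = x * F (m+2+1) x + F (m+2) x := rfl
    have hF3 : F (m+2+1) x = x * F (m+2) x + F (m+1) x := rfl
    have hT3 : T (m+2+1) x = 2*x*T (m+1+1) x - T (m+1) x := rfl
    have hT0 : T 0 x = 1 := rfl
    have hT1 : T 1 x = x := rfl
    have hT2 : T 2 x = 2*x*x - 1 := by simp [T]
    have e : F (m+1+2) x = x * F (m+2) x + F (m+1) x := rfl
    rw [e, ih1, hT0, hT1] at ih2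
    have hA : (∑ k ∈ Finset.Icc 1 m, (x * T (m+2-k) x - 2 * T (m+1-k) x) * F k x)
        = T (m+1+1) x
          - (x*(T (m+1) x - ∑ k ∈ Finset.Icc 1 m, (x * T (m+1-k) x - 2 * T (m-k) x) * F k x)
             + F (m+1) x)
          - (x*x-2)*F (m+1) x := by linarith [ih2]
    rw [hF4, hF3, hT3, ih1, hA, hT0, hT1, hT2]
    ring

theorem stmt0 (n : ℕ) (hn : 1 ≤ n) (x : ℝ) :
    F n x = T (n-1) x - ∑ k ∈ Finset.Icc 1 (n-2), (x * T (n-1-k) x - 2 * T (n-2-k) x) * F k x := by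
  match n, hn with
  | 1, _ => simp [F, T]
  | (m+2), _ => exact fib_eq_cheb m x
end

section
/- For every integer n ≥ 1 and every real x, F_n(x) + x·F_{n-1}(x) = U_{n-1}(x) − Σ_{k=1}^{n-2} (x·U_{n-1-k}(x) − 2·U_{n-2-k}(x))·F_k(x). -/
lemma aux_stmt1 : ∀ (n : ℕ) (x : ℝ),
    F (n+1) x + x * F n x = U n x - ∑ k ∈ Finset.Icc 1 (n-1), (x * U (n-k) x - 2 * U (n-1-k) x) * F k x := by
  intro n
  induction n using Nat.strong_induction_on with
  | _ n ih =>
    match n with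
    | 0 => intro x; simp [F, U]
    | 1 => intro x; simp [F, U]; ring
    | 2 => intro x; rw [Finset.Icc_self, Finset.sum_singleton]; norm_num [F, U]; ring
    | (m+3) =>
      intro x
      have IH1 := ih (m+2) (by omega) x
      have IH0 := ih (m+1) (by omega) x
      -- split sums
      have e1 : (m+3) - 1 = m + 2 := by omega
      have e2 : (m+2) - 1 = m + 1 := by omega
      have e3 : (m+1) - 1 = m := by omega
      rw [e1]
      rw [e2] at IH1
      rw [e3] at IH0
      rw [show (m+2) = (m+1)+1 from rfl, Finset.sum_Icc_succ_top (by omega),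
          show (m+1) = m+1 from rfl, Finset.sum_Icc_succ_top (by omega)]
      rw [Finset.sum_Icc_succ_top (by omega)] at IH1
      -- pointwise recurrence on the common part
      have hsum : ∑ k ∈ Finset.Icc 1 m, (x * U (m+3-k) x - 2 * U (m+2-k) x) * F k x
          = 2*x*(∑ k ∈ Finset.Icc 1 m, (x * U (m+2-k) x - 2 * U (m+1-k) x) * F k x)
            - ∑ k ∈ Finset.Icc 1 m, (x * U (m+1-k) x - 2 * U (m-k) x) * F k x := by
        rw [Finset.mul_sum, ← Finset.sum_sub_distrib]
        refine Finset.sum_congr rfl ?_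
        intro k hk
        rw [Finset.mem_Icc] at hk
        obtain ⟨j, hj⟩ := Nat.le.dest hk.2
        have h0 : m - k = j := by omega
        have h1 : m + 1 - k = j + 1 := by omega
        have h2 : m + 2 - k = j + 2 := by omega
        have h3 : m + 3 - k = j + 3 := by omega
        rw [h0, h1, h2, h3]
        have u2 : U (j+2) x = 2*x*U (j+1) x - U j x := by simp [U]
        have u3 : U (j+3) x = 2*x*U (j+2) x - U (j+1) x := by simp [U]
        rw [u3, u2]; ring
      rw [hsum]
      -- boundary index simplifications
      have b1 : m + 3 - (m+2) = 1 := by omega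
      have b2 : m + 2 - (m+2) = 0 := by omega
      have b3 : m + 3 - (m+1) = 2 := by omega
      have b4 : m + 2 - (m+1) = 1 := by omega
      have b5 : m + 1 - (m+1) = 0 := by omega
      rw [b1, b2, b3, b4] 
      rw [b4, b5] at IH1
      have hS1 : ∑ k ∈ Finset.Icc 1 m, (x * U (m+2-k) x - 2 * U (m+1-k) x) * F k x
          = U (m+2) x - F (m+3) x - x * F (m+2) x - (x * U 1 x - 2 * U 0 x) * F (m+1) x := by
        linarith [IH1]
      have hS0 : ∑ k ∈ Finset.Icc 1 m, (x * U (m+1-k) x - 2 * U (m-k) x) * F k x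
          = U (m+1) x - F (m+2) x - x * F (m+1) x := by
        linarith [IH0]
      rw [hS1, hS0]
      have u3 : U (m+3) x = 2*x*U (m+2) x - U (m+1) x := by simp [U]
      have f4 : F (m+4) x = x*F (m+3) x + F (m+2) x := by simp [F]
      have f3 : F (m+3) x = x*F (m+2) x + F (m+1) x := by simp [F]
      have u0 : U 0 x = 1 := rfl
      have u1 : U 1 x = 2*x := rfl
      have u2 : U 2 x = 2*x*(2*x) - 1 := by simp [U]
      rw [show m+3+1 = m+4 from rfl] at *
      rw [u3, f4, f3, u0, u1, u2]
      ring

theorem stmt1 (n : ℕ) (hn : 1 ≤ n) (x : ℝ) :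
    F n x + x * F (n-1) x = U (n-1) x - ∑ k ∈ Finset.Icc 1 (n-2), (x * U (n-1-k) x - 2 * U (n-2-k) x) * F k x := by
  obtain ⟨m, rfl⟩ := Nat.exists_eq_add_of_le hn
  have h1 : 1 + m - 1 = m := by omega
  have h2 : 1 + m - 2 = m - 1 := by omega
  rw [show 1 + m = m + 1 from by omega, show m+1-1 = m from by omega, show m+1-2 = m-1 from by omega]
  exact aux_stmt1 m x
end

section
/- For every integer n ≥ 1 and every real x, x·(F_{2n+1}(x) − F_{2n-1}(x)) = T_{2n+1}(x) − T_{2n-1}(x) − (3x²−4)·Σ_{k=0}^{n-1} F_{2k+1}(x)·T_{2(n-k)-1}(x). -/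
lemma T_rec (m : ℕ) (x : ℝ) : T (m+2) x = 2*x*T (m+1) x - T m x := rfl

lemma F_rec (m : ℕ) (x : ℝ) : F (m+2) x = x*F (m+1) x + F m x := rfl

lemma T_step4 (m : ℕ) (x : ℝ) : T (m+4) x = (4*x^2-2) * T (m+2) x - T m x := by
  have h1 : T (m+4) x = 2*x*T (m+3) x - T (m+2) x := T_rec (m+2) x
  have h2 : T (m+3) x = 2*x*T (m+2) x - T (m+1) x := T_rec (m+1) x
  have h3 : T (m+2) x = 2*x*T (m+1) x - T m x := T_rec m x
  linear_combination h1 + 2*x*h2 + h3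

lemma F_step4 (m : ℕ) (x : ℝ) : F (m+4) x = (x^2+2) * F (m+2) x - F m x := by
  have h1 : F (m+4) x = x*F (m+3) x + F (m+2) x := F_rec (m+2) x
  have h2 : F (m+3) x = x*F (m+2) x + F (m+1) x := F_rec (m+1) x
  have h3 : F (m+2) x = x*F (m+1) x + F m x := F_rec m x
  linear_combination h1 + x*h2 - h3

lemma Srec (x : ℝ) (n : ℕ) :
    (∑ k ∈ Finset.range (n+2), F (2*k+1) x * T (2*(n+2-k)-1) x) =
    (4*x^2-2) * (∑ k ∈ Finset.range (n+1), F (2*k+1) x * T (2*(n+1-k)-1) x)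
    - (∑ k ∈ Finset.range n, F (2*k+1) x * T (2*(n-k)-1) x)
    + x * (F (2*n+3) x - F (2*n+1) x) := by
  rw [Finset.sum_range_succ, Finset.sum_range_succ, Finset.sum_range_succ]
  have key : ∀ k ∈ Finset.range n,
      F (2*k+1) x * T (2*(n+2-k)-1) x
        = (4*x^2-2) * (F (2*k+1) x * T (2*(n+1-k)-1) x) - F (2*k+1) x * T (2*(n-k)-1) x := by
    intro k hk
    rw [Finset.mem_range] at hk
    have e1 : 2*(n+2-k)-1 = (2*(n-k)-1)+4 := by omega
    have e2 : 2*(n+1-k)-1 = (2*(n-k)-1)+2 := by omega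
    rw [e1, e2, T_step4]
    ring
  rw [Finset.sum_congr rfl key, Finset.sum_sub_distrib, ← Finset.mul_sum]
  have e3 : 2*(n+2-n)-1 = 3 := by omega
  have e4 : 2*(n+2-(n+1))-1 = 1 := by omega
  have e5 : 2*(n+1-n)-1 = 1 := by omega
  have e6 : 2*(n+1)+1 = 2*n+3 := by omega
  rw [e3, e4, e5, e6]
  have t3 : T 3 x = 4*x^3 - 3*x := by
    have h2 : T 3 x = 2*x*T 2 x - T 1 x := T_rec 1 x
    have h3 : T 2 x = 2*x*T 1 x - T 0 x := T_rec 0 x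
    rw [h2, h3]; show 2*x*(2*x*x-1) - x = _; ring
  have t1 : T 1 x = x := rfl
  rw [t3, t1]
  have f3 : F (2*n+3) x = x * F (2*n+2) x + F (2*n+1) x := F_rec (2*n+1) x
  ring

def Q (x : ℝ) (n : ℕ) : Prop :=
  x * (F (2*n+3) x - F (2*n+1) x) =
    T (2*n+3) x - T (2*n+1) x
      - (3*x^2-4) * ∑ k ∈ Finset.range (n+1), F (2*k+1) x * T (2*(n+1-k)-1) x

lemma aux (x : ℝ) : ∀ n : ℕ, Q x n ∧ Q x (n+1) := by
  intro n
  induction n with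
  | zero =>
    constructor
    · show x * (F 3 x - F 1 x) = T 3 x - T 1 x - (3*x^2-4) * ∑ k ∈ Finset.range 1, F (2*k+1) x * T (2*(1-k)-1) x
      rw [Finset.sum_range_one]
      show x * ((x*(x*1+0)+1) - 1) = (2*x*(2*x*x-1)-x) - x - (3*x^2-4)*(1*x)
      ring
    · show x * (F 5 x - F 3 x) = T 5 x - T 3 x - (3*x^2-4) * ∑ k ∈ Finset.range 2, F (2*k+1) x * T (2*(2-k)-1) x
      rw [Finset.sum_range_succ, Finset.sum_range_one]
      show x * ((x*(x*(x*(x*1+0)+1)+(x*1+0))+(x*(x*1+0)+1)) - (x*(x*1+0)+1))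
        = (2*x*(2*x*(2*x*(2*x*x-1)-x)-(2*x*x-1))-(2*x*(2*x*x-1)-x)) - (2*x*(2*x*x-1)-x)
          - (3*x^2-4)*(1*(2*x*(2*x*x-1)-x) + (x*(x*1+0)+1)*x)
      ring
  | succ n ih =>
    obtain ⟨h1, h2⟩ := ih
    refine ⟨h2, ?_⟩
    unfold Q at h1 h2 ⊢
    have Sr := Srec x (n+1)
    have e1 : n+1+2 = n+3 := rfl
    have e2 : n+1+1 = n+2 := rfl
    have e3 : 2*(n+1)+3 = 2*n+5 := by omega
    have e4 : 2*(n+1)+1 = 2*n+3 := by omega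
    rw [e1, e2, e3, e4] at Sr
    rw [e2, e3, e4] at h2
    have e5 : 2*(n+2)+3 = 2*n+7 := by omega
    have e6 : 2*(n+2)+1 = 2*n+5 := by omega
    have e7 : n+2+1 = n+3 := rfl
    rw [e5, e6, e7]
    have Ta : T (2*n+7) x = (4*x^2-2) * T (2*n+5) x - T (2*n+3) x := T_step4 (2*n+3) x
    have Tb : T (2*n+5) x = (4*x^2-2) * T (2*n+3) x - T (2*n+1) x := T_step4 (2*n+1) x
    have Fa : F (2*n+7) x = (x^2+2) * F (2*n+5) x - F (2*n+3) x := F_step4 (2*n+3) x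
    have Fb : F (2*n+5) x = (x^2+2) * F (2*n+3) x - F (2*n+1) x := F_step4 (2*n+1) x
    linear_combination -h1 + (4*x^2-2)*h2 + (3*x^2-4)*Sr - Ta + Tb + x*Fa - x*Fb

theorem stmt2 (n : ℕ) (hn : 1 ≤ n) (x : ℝ) :
    x * (F (2*n+1) x - F (2*n-1) x) =
      T (2*n+1) x - T (2*n-1) x - (3*x^2 - 4) * ∑ k ∈ Finset.range n, F (2*k+1) x * T (2*(n-k)-1) x := by
  obtain ⟨m, rfl⟩ : ∃ m, n = m+1 := ⟨n-1, by omega⟩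
  have h := (aux x m).1
  unfold Q at h
  have e1 : 2*(m+1)+1 = 2*m+3 := by omega
  have e2 : 2*(m+1)-1 = 2*m+1 := by omega
  rw [e1, e2]
  convert h using 3
end

section
/- For every integer n ≥ 1 and every real x, 2x·F_{2n+1}(x) = U_{2n+1}(x) − U_{2n-1}(x) − (3x²−4)·Σ_{k=0}^{n-1} F_{2k+1}(x)·U_{2(n-k)-1}(x). -/
lemma U_add2 (n : ℕ) (x : ℝ) : U (n+2) x = 2*x*U (n+1) x - U n x := rfl
lemma F_add2 (n : ℕ) (x : ℝ) : F (n+2) x = x*F (n+1) x + F n x := rfl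

lemma Urec4 (n : ℕ) (x : ℝ) : U (n+4) x = (4*x^2-2) * U (n+2) x - U n x := by
  have h1 : U (n+4) x = 2*x*U (n+3) x - U (n+2) x := rfl
  have h2 : U (n+3) x = 2*x*U (n+2) x - U (n+1) x := rfl
  rw [h1, h2, U_add2]; ring

lemma Frec4 (n : ℕ) (x : ℝ) : F (n+4) x = (x^2+2) * F (n+2) x - F n x := by
  have h1 : F (n+4) x = x*F (n+3) x + F (n+2) x := rfl
  have h2 : F (n+3) x = x*F (n+2) x + F (n+1) x := rfl
  rw [h1, h2, F_add2]; ring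

noncomputable def Saux (m : ℕ) (x : ℝ) : ℝ :=
  ∑ k ∈ Finset.range (m+1), F (2*k+1) x * U (2*(m-k)+1) x

lemma Saux_succ (m : ℕ) (x : ℝ) :
    Saux (m+1) x = (∑ k ∈ Finset.range (m+1), F (2*k+1) x * U (2*(m-k)+3) x)
      + 2*x*F (2*m+3) x := by
  unfold Saux
  rw [Finset.sum_range_succ]
  congr 1
  · apply Finset.sum_congr rfl
    intro k hk
    have hk' : k ≤ m := by simpa [Nat.lt_succ_iff] using hk
    have : 2*(m+1-k)+1 = 2*(m-k)+3 := by omega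
    rw [this]
  · have h1 : 2*(m+1-(m+1))+1 = 1 := by omega
    have h2 : 2*(m+1)+1 = 2*m+3 := by omega
    rw [h1, h2]
    show F (2*m+3) x * (2*x) = _
    ring

lemma Saux_rec (m : ℕ) (x : ℝ) :
    Saux (m+2) x = 2*x*F (2*m+5) x + (4*x^2-2) * Saux (m+1) x - Saux m x := by
  have e2 : Saux (m+2) x = (∑ k ∈ Finset.range (m+1), F (2*k+1) x * U (2*(m-k)+5) x)
      + F (2*m+3) x * U 3 x + F (2*m+5) x * (2*x) := by
    unfold Saux
    rw [Finset.sum_range_succ, Finset.sum_range_succ]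
    congr 2
    · apply Finset.sum_congr rfl
      intro k hk
      have hk' : k ≤ m := by simpa [Nat.lt_succ_iff] using hk
      have : 2*(m+2-k)+1 = 2*(m-k)+5 := by omega
      rw [this]
    · have h1 : 2*(m+2-(m+1))+1 = 3 := by omega
      have h2 : 2*(m+1)+1 = 2*m+3 := by omega
      rw [h1, h2]
    · have h1 : 2*(m+2-(m+2))+1 = 1 := by omega
      rw [h1]; rfl
  have e3 : ∀ k, U (2*(m-k)+5) x = (4*x^2-2) * U (2*(m-k)+3) x - U (2*(m-k)+1) x := by
    intro k; exact Urec4 (2*(m-k)+1) x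
  have e4 : (∑ k ∈ Finset.range (m+1), F (2*k+1) x * U (2*(m-k)+5) x)
      = (4*x^2-2) * (∑ k ∈ Finset.range (m+1), F (2*k+1) x * U (2*(m-k)+3) x)
        - Saux m x := by
    unfold Saux
    rw [Finset.mul_sum, ← Finset.sum_sub_distrib]
    apply Finset.sum_congr rfl
    intro k hk
    rw [e3 k]; ring
  have e5 := Saux_succ m x
  have hU3 : U 3 x = 2*x*(4*x^2-2) := by
    have : U 3 x = 2*x*U 2 x - U 1 x := rfl
    rw [this, U_add2]; show _ = _ ; simp [U]; ring
  rw [e2, e4]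
  have : (∑ k ∈ Finset.range (m+1), F (2*k+1) x * U (2*(m-k)+3) x)
      = Saux (m+1) x - 2*x*F (2*m+3) x := by rw [e5]; ring
  rw [this, hU3]; ring

lemma auxid (x : ℝ) : ∀ m : ℕ,
    2*x * F (2*m+3) x = U (2*m+3) x - U (2*m+1) x - (3*x^2-4) * Saux m x
  | 0 => by
    have hF3 : F 3 x = x*x + 1 := by
      have : F 3 x = x*F 2 x + F 1 x := rfl
      rw [this]; show x*(x*F 1 x + F 0 x) + F 1 x = _; simp [F]
    have hU3 : U 3 x = 2*x*(4*x^2-2) := by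
      have h1 : U 3 x = 2*x*U 2 x - U 1 x := rfl
      rw [h1]; show 2*x*(2*x*U 1 x - U 0 x) - U 1 x = _; simp [U]; ring
    have hS : Saux 0 x = 2*x := by
      unfold Saux; rw [Finset.sum_range_one]; show F 1 x * U 1 x = 2*x; simp [F, U]
    simpa [hF3, hU3, hS] using by ring_nf; simp [U]; ring
  | 1 => by
    have hF3 : F 3 x = x^2 + 1 := by
      have : F 3 x = x*F 2 x + F 1 x := rfl
      rw [this]; show x*(x*F 1 x + F 0 x) + F 1 x = _; simp [F]; ring
    have hU3 : U 3 x = 8*x^3 - 4*x := by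
      have h1 : U 3 x = 2*x*U 2 x - U 1 x := rfl
      rw [h1]; show 2*x*(2*x*U 1 x - U 0 x) - U 1 x = _; simp [U]; ring
    have hU5 : U 5 x = (4*x^2-2)*U 3 x - U 1 x := Urec4 1 x
    have hF5 : F 5 x = (x^2+2)*F 3 x - F 1 x := Frec4 1 x
    have hS1 : Saux 1 x = U 3 x + 2*x*F 3 x := by
      rw [Saux_succ 0 x, Finset.sum_range_one]
      norm_num
      have h1 : F 1 x = 1 := rfl
      rw [h1]; ring
    rw [show (2*1+3 : ℕ) = 5 from rfl, show (2*1+1 : ℕ) = 3 from rfl,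
      hF5, hU5, hS1, hF3, hU3, show U 1 x = 2*x from rfl, show F 1 x = 1 from rfl]
    ring
  | (m+2) => by
    have h1 := auxid x m
    have h2 := auxid x (m+1)
    have hs := Saux_rec m x
    have hU7 : U (2*m+7) x = (4*x^2-2)*U (2*m+5) x - U (2*m+3) x := Urec4 (2*m+3) x
    have hU5 : U (2*m+5) x = (4*x^2-2)*U (2*m+3) x - U (2*m+1) x := Urec4 (2*m+1) x
    have hF7 : F (2*m+7) x = (x^2+2)*F (2*m+5) x - F (2*m+3) x := Frec4 (2*m+3) x
    have e1 : 2*(m+2)+3 = 2*m+7 := by omega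
    have e2 : 2*(m+2)+1 = 2*m+5 := by omega
    have e3 : 2*(m+1)+3 = 2*m+5 := by omega
    have e4 : 2*(m+1)+1 = 2*m+3 := by omega
    rw [e1, e2]
    rw [e3, e4] at h2
    linear_combination 2*x*hF7 - hU7 + hU5 + (3*x^2-4)*hs + (4*x^2-2)*h2 - h1

theorem stmt3 (n : ℕ) (hn : 1 ≤ n) (x : ℝ) :
    2*x * F (2*n+1) x =
      U (2*n+1) x - U (2*n-1) x - (3*x^2 - 4) * ∑ k ∈ Finset.range n, F (2*k+1) x * U (2*(n-k)-1) x := by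
  obtain ⟨m, rfl⟩ : ∃ m, n = m + 1 := ⟨n - 1, by omega⟩
  have hsum : (∑ k ∈ Finset.range (m+1), F (2*k+1) x * U (2*(m+1-k)-1) x) = Saux m x := by
    unfold Saux
    apply Finset.sum_congr rfl
    intro k hk
    have hk' : k ≤ m := by simpa [Nat.lt_succ_iff] using hk
    have : 2*(m+1-k)-1 = 2*(m-k)+1 := by omega
    rw [this]
  have e1 : 2*(m+1)+1 = 2*m+3 := by omega
  have e2 : 2*(m+1)-1 = 2*m+1 := by omega
  rw [hsum, e1, e2]
  exact auxid x m
end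

section
/- For every integer n ≥ 1 and every real x, F_{2n}(x) − (2x²−1)·F_{2n-2}(x) = x·T_{2n-2}(x) − (3x²−4)·Σ_{k=1}^{n-1} F_{2k}(x)·T_{2(n-k-1)}(x). -/
lemma F_add4 (j : ℕ) (x : ℝ) : F (j+4) x = (x^2+2) * F (j+2) x - F j x := by
  rw [show j+4 = j+2+2 from rfl]
  simp only [F, show j+3 = j+1+2 from rfl]
  ring

lemma T_add4 (j : ℕ) (x : ℝ) : T (j+4) x = (4*x^2-2) * T (j+2) x - T j x := by
  rw [show j+4 = j+2+2 from rfl]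
  simp only [T, show j+3 = j+1+2 from rfl]
  ring

noncomputable def s (m : ℕ) (x : ℝ) : ℝ :=
  ∑ i ∈ Finset.range m, F (2*i+2) x * T (2*(m-1-i)) x

lemma s_succ (m : ℕ) (x : ℝ) :
    s (m+1) x = ∑ i ∈ Finset.range m, F (2*i+4) x * T (2*(m-1-i)) x + F 2 x * T (2*m) x := by
  unfold s
  rw [Finset.sum_range_succ']
  congr 1
  · apply Finset.sum_congr rfl
    intro i hi
    rw [show 2*(i+1)+2 = 2*i+4 from by ring, show m+1-1-(i+1) = m-1-i from by omega]

lemma s_rec (m : ℕ) (x : ℝ) :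
    s (m+2) x = (x^2+2) * s (m+1) x - s m x + x * T (2*m+2) x := by
  have h1 : s (m+2) x = ∑ i ∈ Finset.range m, F (2*i+6) x * T (2*(m-1-i)) x
      + F 4 x * T (2*m) x + F 2 x * T (2*m+2) x := by
    unfold s
    rw [Finset.sum_range_succ', Finset.sum_range_succ']
    congr 1
    congr 1
    · apply Finset.sum_congr rfl
      intro i hi
      rw [show 2*(i+1+1)+2 = 2*i+6 from by ring, show m+2-1-(i+1+1) = m-1-i from by omega]
  have h2 := s_succ m x
  have h3 : ∑ i ∈ Finset.range m, F (2*i+6) x * T (2*(m-1-i)) x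
      = (x^2+2) * ∑ i ∈ Finset.range m, F (2*i+4) x * T (2*(m-1-i)) x - s m x := by
    unfold s
    rw [Finset.mul_sum, ← Finset.sum_sub_distrib]
    apply Finset.sum_congr rfl
    intro i hi
    have := F_add4 (2*i+2) x
    rw [show 2*i+2+4 = 2*i+6 from rfl, show 2*i+2+2 = 2*i+4 from rfl] at this
    rw [this]; ring
  have hF2 : F 2 x = x := by simp [F]
  have hF4 : F 4 x = x^3 + 2*x := by
    show F (0+2+2) x = _
    simp only [F]
    norm_num [F]
    ring
  rw [h1, h3, hF2, hF4]
  rw [hF2] at h2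
  linear_combination (-(x^2+2)) * h2

lemma key (m : ℕ) (x : ℝ) :
    F (2*m+2) x - (2*x^2 - 1) * F (2*m) x = x * T (2*m) x - (3*x^2 - 4) * s m x := by
  induction m using Nat.twoStepInduction with
  | zero => simp [F, T, s]
  | one => simp [F, T, s, Finset.sum_range_one]; ring
  | more m ih0 ih1 =>
    have e1 := F_add4 (2*m) x
    have e2 := F_add4 (2*m+2) x
    have e3 := T_add4 (2*m) x
    have e4 := s_rec m x
    rw [show 2*(m+1)+2 = 2*m+4 from by ring, show 2*(m+1) = 2*m+2 from by ring] at ih1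
    rw [show 2*(m+2)+2 = 2*m+6 from by ring, show 2*(m+2) = 2*m+4 from by ring,
        show 2*m+4 = 2*m+4 from rfl]
    rw [show (2:ℕ)*m+2+4 = 2*m+6 from rfl] at e2
    rw [show (2:ℕ)*m+2+2 = 2*m+4 from rfl] at e1 e2
    rw [show (2:ℕ)*m+4 = 2*m+4 from rfl] at *
    linear_combination e2 - (2*x^2-1)*e1 - x*e3 + (3*x^2-4)*e4 + (x^2+2)*ih1 - ih0

theorem stmt4 (n : ℕ) (hn : 1 ≤ n) (x : ℝ) :
    F (2*n) x - (2*x^2 - 1) * F (2*n-2) x =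
      x * T (2*n-2) x - (3*x^2 - 4) * ∑ k ∈ Finset.Icc 1 (n-1), F (2*k) x * T (2*(n-k-1)) x := by
  obtain ⟨m, rfl⟩ : ∃ m, n = m + 1 := ⟨n - 1, by omega⟩
  have hs : ∑ k ∈ Finset.Icc 1 (m+1-1), F (2*k) x * T (2*((m+1)-k-1)) x = s m x := by
    rw [← Finset.Ico_add_one_right_eq_Icc, Finset.sum_Ico_eq_sum_range]
    rw [show m+1-1+1-1 = m from by omega]
    unfold s
    apply Finset.sum_congr rfl
    intro i hi
    simp only [Finset.mem_range] at hi
    rw [show 2*(1+i) = 2*i+2 from by ring, show m+1-(1+i)-1 = m-1-i from by omega]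
  rw [hs, show 2*(m+1)-2 = 2*m from by omega, show 2*(m+1) = 2*m+2 from by ring]
  exact key m x
end

section
/- For every integer n ≥ 1 and every real x, x²·F_{2n-1}(x) = x·T_{2n-1}(x) − (3x²−4)·Σ_{k=1}^{n-1} T_{2(n-k)-1}(x)·F_{2k}(x). -/
lemma T_step (x : ℝ) (j : ℕ) : T (j+4) x = (4*x^2-2)*T (j+2) x - T j x := by
  simp [T]; ring

lemma F_step (x : ℝ) (j : ℕ) : F (j+4) x = (x^2+2)*F (j+2) x - F j x := by
  simp [F]; ring

lemma aux6 (x : ℝ) : ∀ m : ℕ,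
    x^2 * F (2*m+1) x =
      x * T (2*m+1) x - (3*x^2 - 4) * ∑ k ∈ Finset.Icc 1 m, T (2*(m-k)+1) x * F (2*k) x := by
  have key : ∀ m : ℕ,
      (x^2 * F (2*m+1) x =
        x * T (2*m+1) x - (3*x^2 - 4) * ∑ k ∈ Finset.Icc 1 m, T (2*(m-k)+1) x * F (2*k) x) ∧
      (x^2 * F (2*(m+1)+1) x =
        x * T (2*(m+1)+1) x - (3*x^2 - 4) * ∑ k ∈ Finset.Icc 1 (m+1), T (2*((m+1)-k)+1) x * F (2*k) x) := by
    intro m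
    induction m with
    | zero =>
      constructor
      · simp [F, T]; ring
      · simp [Finset.Icc_self, F, T]; ring
    | succ m ih =>
      obtain ⟨h1, h2⟩ := ih
      refine ⟨h2, ?_⟩
      -- peel off the top two terms of the sum over Icc 1 (m+2)
      rw [Finset.sum_Icc_succ_top (by omega : 1 ≤ m+1+1)]
      rw [Finset.sum_Icc_succ_top (by omega : 1 ≤ m+1)]
      have e2 : ∑ k ∈ Finset.Icc 1 m, T (2*(m+1+1-k)+1) x * F (2*k) x
          = (4*x^2-2) * (∑ k ∈ Finset.Icc 1 m, T (2*(m+1-k)+1) x * F (2*k) x)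
            - ∑ k ∈ Finset.Icc 1 m, T (2*(m-k)+1) x * F (2*k) x := by
        rw [Finset.mul_sum, ← Finset.sum_sub_distrib]
        refine Finset.sum_congr rfl ?_
        intro k hk
        simp only [Finset.mem_Icc] at hk
        have hk1 : 2*(m+1+1-k)+1 = 2*(m-k)+1+4 := by omega
        have hk2 : 2*(m+1-k)+1 = 2*(m-k)+1+2 := by omega
        rw [hk1, hk2, T_step]
        ring
      rw [e2]
      -- abbreviations
      set s0 := ∑ k ∈ Finset.Icc 1 m, T (2*(m-k)+1) x * F (2*k) x with hs0
      set s1 := ∑ k ∈ Finset.Icc 1 (m+1), T (2*(m+1-k)+1) x * F (2*k) x with hs1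
      have e3 : ∑ k ∈ Finset.Icc 1 m, T (2*(m+1-k)+1) x * F (2*k) x
          = s1 - T (2*(m+1-(m+1))+1) x * F (2*(m+1)) x := by
        rw [hs1, Finset.sum_Icc_succ_top (by omega : 1 ≤ m+1)]
        ring
      rw [e3]
      have hT5 : T (2*(m+1+1)+1) x = (4*x^2-2)*T (2*(m+1)+1) x - T (2*m+1) x := by
        rw [show 2*(m+1+1)+1 = 2*m+1+4 by ring, show 2*(m+1)+1 = 2*m+1+2 by ring, T_step]
      have hF5 : F (2*(m+1+1)+1) x = (x^2+2)*F (2*(m+1)+1) x - F (2*m+1) x := by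
        rw [show 2*(m+1+1)+1 = 2*m+1+4 by ring, show 2*(m+1)+1 = 2*m+1+2 by ring, F_step]
      have hF4 : F (2*(m+1+1)) x = x * F (2*(m+1)+1) x + F (2*(m+1)) x := by
        rw [show 2*(m+1+1) = 2*(m+1)+1+1 by ring]
        show F (2*(m+1)+2) x = _
        simp [F]
      have ht1 : T (2*(m+1+1-(m+1))+1) x = T 3 x := by norm_num
      have ht0 : T (2*(m+1+1-(m+1+1))+1) x = T 1 x := by norm_num
      rw [ht1, ht0, hT5, hF5, hF4]
      have hT3 : T 3 x = 4*x^3 - 3*x := by simp [T]; ring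
      have hT1 : T 1 x = x := rfl
      rw [hT3, hT1]
      have htt : T (2*(m+1-(m+1))+1) x = x := by norm_num [T]
      rw [htt]
      linear_combination (4*x^2-2)*h2 - h1
  intro m
  exact (key m).1

theorem stmt6 (n : ℕ) (hn : 1 ≤ n) (x : ℝ) :
    x^2 * F (2*n-1) x =
      x * T (2*n-1) x - (3*x^2 - 4) * ∑ k ∈ Finset.Icc 1 (n-1), T (2*(n-k)-1) x * F (2*k) x := by
  obtain ⟨m, rfl⟩ : ∃ m, n = m + 1 := ⟨n - 1, by omega⟩
  have h1 : 2*(m+1)-1 = 2*m+1 := by omega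
  have h2 : m+1-1 = m := by omega
  rw [h1, h2]
  have h3 : ∑ k ∈ Finset.Icc 1 m, T (2*(m+1-k)-1) x * F (2*k) x
      = ∑ k ∈ Finset.Icc 1 m, T (2*(m-k)+1) x * F (2*k) x := by
    refine Finset.sum_congr rfl ?_
    intro k hk
    simp only [Finset.mem_Icc] at hk
    congr 2
    omega
  rw [h3]
  exact aux6 x m
end

section
/- For every integer n ≥ 1 and every real x, 2x·F_{2n}(x) = x·U_{2n-1}(x) − (3x²−4)·Σ_{k=1}^{n-1} U_{2(n-k)-1}(x)·F_{2k}(x). -/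
lemma Ustep (n : ℕ) (x : ℝ) : U (n+4) x = (4*x^2-2)*U (n+2) x - U n x := by
  show 2*x*U (n+3) x - U (n+2) x = _
  rw [show U (n+3) x = 2*x*U (n+2) x - U (n+1) x from rfl,
      show U (n+2) x = 2*x*U (n+1) x - U n x from rfl]
  ring

lemma Fstep (n : ℕ) (x : ℝ) : F (n+4) x = (x^2+2)*F (n+2) x - F n x := by
  show x*F (n+3) x + F (n+2) x = _
  rw [show F (n+3) x = x*F (n+2) x + F (n+1) x from rfl,
      show F (n+2) x = x*F (n+1) x + F n x from rfl]
  ring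

lemma F2eq (x : ℝ) : F 2 x = x := by
  rw [show F 2 x = x*F 1 x + F 0 x from rfl]
  simp [F]

lemma aux_s7 (x : ℝ) : ∀ m j : ℕ,
    (3*x^2-4) * ∑ k ∈ Finset.Icc 1 m, U (2*(m+j+2-k)-1) x * F (2*k) x =
      x * U (2*m+2*j+3) x - U (2*j+3) x * F (2*m+2) x + U (2*j+1) x * F (2*m) x := by
  intro m
  induction m with
  | zero =>
    intro j
    rw [show Finset.Icc 1 0 = ∅ from rfl, Finset.sum_empty, mul_zero,
        show 2*0+2*j+3 = 2*j+3 from by ring, show 2*0+2 = 2 from by ring,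
        show 2*0 = 0 from by ring, F2eq, show F 0 x = 0 from rfl]
    ring
  | succ m ih =>
    intro j
    rw [Finset.sum_Icc_succ_top (by omega : 1 ≤ m + 1)]
    have hsum : ∑ k ∈ Finset.Icc 1 m, U (2*(m+1+j+2-k)-1) x * F (2*k) x
        = ∑ k ∈ Finset.Icc 1 m, U (2*(m+(j+1)+2-k)-1) x * F (2*k) x := by
      apply Finset.sum_congr rfl
      intro k hk
      have := Finset.mem_Icc.mp hk
      congr 2
      omega
    rw [show (2*(m+1+j+2-(m+1))-1) = 2*j+3 from by omega]
    rw [mul_add, hsum, ih (j+1)]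
    rw [show 2*(j+1)+3 = (2*j+1)+4 from by ring, Ustep (2*j+1) x,
        show 2*(j+1)+1 = 2*j+3 from by ring,
        show 2*(m+1)+2 = (2*m)+4 from by ring, Fstep (2*m) x,
        show 2*m+2*(j+1)+3 = 2*(m+1)+2*j+3 from by ring,
        show 2*(m+1) = 2*m+2 from by ring]
    ring

theorem stmt7 (n : ℕ) (hn : 1 ≤ n) (x : ℝ) :
    2*x * F (2*n) x =
      x * U (2*n-1) x - (3*x^2 - 4) * ∑ k ∈ Finset.Icc 1 (n-1), U (2*(n-k)-1) x * F (2*k) x := by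
  obtain ⟨m, rfl⟩ : ∃ m, n = m+1 := ⟨n-1, by omega⟩
  cases m with
  | zero =>
    rw [show (1:ℕ)-1 = 0 from rfl, show Finset.Icc 1 0 = ∅ from rfl, Finset.sum_empty,
        mul_zero, show 2*1-1 = 2 - 1 from rfl, show (2:ℕ)-1 = 1 from rfl,
        show (2:ℕ)*1 = 2 from rfl, F2eq, show U 1 x = 2*x from rfl]
    ring
  | succ m =>
    have key := aux_s7 x m 0
    rw [show 2*m+2*0+3 = 2*m+3 from by ring, show 2*0+3 = 3 from by norm_num,
        show 2*0+1 = 1 from by norm_num, show U 1 x = 2*x from rfl,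
        show U 3 x = 2*x*(2*x*(2*x)-1) - 2*x from rfl] at key
    have hsum : ∑ k ∈ Finset.Icc 1 (m+1+1-1), U (2*(m+1+1-k)-1) x * F (2*k) x
        = (∑ k ∈ Finset.Icc 1 m, U (2*(m+0+2-k)-1) x * F (2*k) x) + 2*x * F (2*m+2) x := by
      rw [show m+1+1-1 = m+1 from rfl, Finset.sum_Icc_succ_top (by omega : 1 ≤ m + 1),
          show 2*(m+1+1-(m+1))-1 = 1 from by omega, show U 1 x = 2*x from rfl,
          show 2*(m+1) = 2*m+2 from by ring]
    rw [hsum, show 2*(m+1+1)-1 = 2*m+3 from by omega,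
        show 2*(m+1+1) = (2*m)+4 from by ring, Fstep (2*m) x]
    linear_combination key
end

section
/- For every integer n ≥ 1 and every real x, F_n(3x) = C_{n-1}(x) − Σ_{k=1}^{n-2} (3x·C_{n-k-1}(x) − 2·C_{n-k-2}(x))·F_k(3x), where C_m(x) denotes the Lucas-balancing polynomials. -/
lemma key_s12 (x : ℝ) : ∀ m : ℕ,
    F (m+1) (3*x) = C m x - ∑ k ∈ Finset.Icc 1 (m-1), (3*x * C (m-k) x - 2 * C (m-k-1) x) * F k (3*x) := by
  intro m
  induction m using Nat.strong_induction_on with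
  | _ m ih =>
    match m with
    | 0 => simp [F, C]
    | 1 => simp [F, C]
    | 2 =>
      have h : Finset.Icc 1 (2-1) = {1} := rfl
      rw [h]
      simp [F, C]; ring
    | (m+3) =>
      have ih2 := ih (m+2) (by omega)
      have ih1 := ih (m+1) (by omega)
      set y := 3*x with hy
      have hsplit : ∑ k ∈ Finset.Icc 1 (m+3-1), (y * C (m+3-k) x - 2 * C (m+3-k-1) x) * F k y
          = (∑ k ∈ Finset.Icc 1 m, (y * C (m+3-k) x - 2 * C (m+3-k-1) x) * F k y)
            + (y * C 2 x - 2 * C 1 x) * F (m+1) y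
            + (y * C 1 x - 2 * C 0 x) * F (m+2) y := by
        rw [show (m+3-1:ℕ) = (m+1)+1 from by omega, Finset.sum_Icc_succ_top (by omega),
            Finset.sum_Icc_succ_top (show (1:ℕ) ≤ m+1 from by omega)]
        rw [show (m+3-(m+1+1)-1:ℕ) = 0 from by omega, show (m+3-(m+1+1):ℕ) = 1 from by omega,
            show (m+3-(m+1)-1:ℕ) = 1 from by omega, show (m+3-(m+1):ℕ) = 2 from by omega,
            show (m+2:ℕ) = m+1+1 from rfl]
      have hrec : ∑ k ∈ Finset.Icc 1 m, (y * C (m+3-k) x - 2 * C (m+3-k-1) x) * F k y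
          = ∑ k ∈ Finset.Icc 1 m, (6*x * ((y * C (m+2-k) x - 2 * C (m+2-k-1) x) * F k y)
              - (y * C (m+1-k) x - 2 * C (m+1-k-1) x) * F k y) := by
        apply Finset.sum_congr rfl
        intro k hk
        simp only [Finset.mem_Icc] at hk
        obtain ⟨hk1, hk2⟩ := hk
        rw [show (m+3-k-1:ℕ) = (m-k)+2 from by omega, show (m+3-k:ℕ) = (m-k)+3 from by omega,
            show (m+2-k-1:ℕ) = (m-k)+1 from by omega, show (m+2-k:ℕ) = (m-k)+2 from by omega,
            show (m+1-k-1:ℕ) = m-k from by omega, show (m+1-k:ℕ) = (m-k)+1 from by omega]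
        have hc3 : C (m-k+3) x = 6*x*C (m-k+2) x - C (m-k+1) x := rfl
        have hc2 : C (m-k+2) x = 6*x*C (m-k+1) x - C (m-k) x := rfl
        rw [hc3, hc2]; ring
      have hS2 : ∑ k ∈ Finset.Icc 1 (m+2-1), (y * C (m+2-k) x - 2 * C (m+2-k-1) x) * F k y
          = (∑ k ∈ Finset.Icc 1 m, (y * C (m+2-k) x - 2 * C (m+2-k-1) x) * F k y)
            + (y * C 1 x - 2 * C 0 x) * F (m+1) y := by
        rw [show (m+2-1:ℕ) = m+1 from by omega,
            Finset.sum_Icc_succ_top (show (1:ℕ) ≤ m+1 from by omega)]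
        rw [show (m+2-(m+1)-1:ℕ) = 0 from by omega, show (m+2-(m+1):ℕ) = 1 from by omega]
      rw [hS2] at ih2
      rw [show (m+1-1:ℕ) = m from by omega] at ih1
      rw [Finset.sum_sub_distrib, ← Finset.mul_sum] at hrec
      rw [hsplit, hrec]
      have e2 : ∑ k ∈ Finset.Icc 1 m, (y * C (m+2-k) x - 2 * C (m+2-k-1) x) * F k y
          = C (m+2) x - F (m+2+1) y - (y * C 1 x - 2 * C 0 x) * F (m+1) y := by
        linarith [ih2]
      have e1 : ∑ k ∈ Finset.Icc 1 m, (y * C (m+1-k) x - 2 * C (m+1-k-1) x) * F k y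
          = C (m+1) x - F (m+1+1) y := by linarith [ih1]
      rw [e2, e1]
      have hF4 : F (m+3+1) y = y * F (m+2+1) y + F (m+1+1) y := rfl
      have hF3 : F (m+2+1) y = y * F (m+1+1) y + F (m+1) y := rfl
      have hC3 : C (m+3) x = 6*x*C (m+2) x - C (m+1) x := rfl
      have hC2v : C 2 x = 6*x*(3*x) - 1 := by
        show 6*x*C 1 x - C 0 x = _
        simp [C]
      have hC1 : C 1 x = 3*x := rfl
      have hC0 : C 0 x = 1 := rfl
      rw [hF4, hF3, hC3, hC2v, hC1, hC0, hy]
      ring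

theorem stmt12 (n : ℕ) (hn : 1 ≤ n) (x : ℝ) :
    F n (3*x) = C (n-1) x - ∑ k ∈ Finset.Icc 1 (n-2), (3*x * C (n-k-1) x - 2 * C (n-k-2) x) * F k (3*x) := by
  obtain ⟨m, rfl⟩ : ∃ m, n = m + 1 := ⟨n - 1, by omega⟩
  have h := key_s12 x m
  rw [show (m+1-1:ℕ) = m from by omega, show (m+1-2:ℕ) = m - 1 from by omega, h]
  congr 1
  apply Finset.sum_congr rfl
  intro k hk
  simp only [Finset.mem_Icc] at hk
  rw [show (m+1-k-2:ℕ) = m - k - 1 from by omega, show (m+1-k-1:ℕ) = m - k from by omega]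
end

section
/- For every integer n ≥ 1, 15·F_{4n} = 12·(4^n − 4^{−n}) + 11·Σ_{k=1}^{n-1} (4^k − 4^{−k})·F_{4(n−k)}, where F_m denotes the m-th Fibonacci number (identity in the rationals, or equivalently after clearing denominators by 4^n). -/
def gq (k : ℕ) : ℚ := (4:ℚ)^(k:ℤ) - (4:ℚ)^(-(k:ℤ))
noncomputable def fq (j : ℕ) : ℚ := (Nat.fib (4*j) : ℚ)

lemma fibnat (a : ℕ) : Nat.fib (a+12) + Nat.fib (a+4) = 7 * Nat.fib (a+8) := by
  simp [Nat.fib_add_two]; ring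

lemma fibq (j : ℕ) : fq (j+3) = 7 * fq (j+2) - fq (j+1) := by
  have h := fibnat (4*j)
  have h' : (Nat.fib (4*j+12) : ℚ) + Nat.fib (4*j+4) = 7 * Nat.fib (4*j+8) := by exact_mod_cast h
  unfold fq
  rw [show 4*(j+3) = 4*j+12 by ring, show 4*(j+2) = 4*j+8 by ring, show 4*(j+1) = 4*j+4 by ring]
  linarith

lemma gkey (m : ℕ) : 12 * gq (m+3) = 51 * gq (m+2) - 12 * gq (m+1) := by
  unfold gq
  push_cast
  rw [show -((m:ℤ)+3) = -(m:ℤ) + (-3) by ring, show -((m:ℤ)+2) = -(m:ℤ) + (-2) by ring,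
    show -((m:ℤ)+1) = -(m:ℤ) + (-1) by ring]
  rw [zpow_add₀ (by norm_num : (4:ℚ) ≠ 0), zpow_add₀ (by norm_num : (4:ℚ) ≠ 0),
    zpow_add₀ (by norm_num : (4:ℚ) ≠ 0), zpow_add₀ (by norm_num : (4:ℚ) ≠ 0),
    zpow_add₀ (by norm_num : (4:ℚ) ≠ 0), zpow_add₀ (by norm_num : (4:ℚ) ≠ 0)]
  norm_num; ring

lemma main15 (m : ℕ) :
    15 * fq (m+1) = 12 * gq (m+1) + 11 * ∑ k ∈ Finset.Icc 1 m, gq k * fq (m+1-k) := by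
  induction m using Nat.twoStepInduction with
  | zero =>
    simp [fq, gq]
    norm_num [show Nat.fib 4 = 3 from rfl]
  | one =>
    rw [show Finset.Icc 1 1 = {1} from rfl]
    simp [fq, gq]
    norm_num [show Nat.fib 8 = 21 from rfl, show Nat.fib 4 = 3 from rfl]
  | more m ih1 ih2 =>
    rw [Finset.sum_Icc_succ_top (by omega : 1 ≤ m+2), Finset.sum_Icc_succ_top (by omega : 1 ≤ m+1)]
    rw [Finset.sum_Icc_succ_top (by omega : 1 ≤ m+1)] at ih2
    have hsum : ∑ k ∈ Finset.Icc 1 m, gq k * fq (m+2+1-k)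
        = 7 * (∑ k ∈ Finset.Icc 1 m, gq k * fq (m+1+1-k))
          - ∑ k ∈ Finset.Icc 1 m, gq k * fq (m+1-k) := by
      rw [Finset.mul_sum, ← Finset.sum_sub_distrib]
      refine Finset.sum_congr rfl fun k hk => ?_
      have hk' : 1 ≤ k ∧ k ≤ m := Finset.mem_Icc.mp hk
      have e1 : m+2+1-k = (m-k)+3 := by omega
      have e2 : m+1+1-k = (m-k)+2 := by omega
      have e3 : m+1-k = (m-k)+1 := by omega
      rw [e1, e2, e3, fibq (m-k)]
      ring
    rw [hsum]
    have e4 : m+2+1-(m+1) = 2 := by omega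
    have e5 : m+2+1-(m+2) = 1 := by omega
    have e6 : m+1+1-(m+1) = 1 := by omega
    rw [e4, e5] ; rw [e6] at ih2
    have hf : fq (m+2+1) = 7 * fq (m+1+1) - fq (m+1) := fibq m
    have hg : 12 * gq (m+2+1) = 51 * gq (m+1+1) - 12 * gq (m+1) := gkey m
    have hf1 : fq 1 = 3 := by norm_num [fq, show Nat.fib 4 = 3 from rfl]
    have hf2 : fq 2 = 21 := by norm_num [fq, show Nat.fib 8 = 21 from rfl]
    rw [show m+3 = m+2+1 from rfl, hf, hf1, hf2]
    linear_combination 7 * ih2 - ih1 - hg + 77 * gq (m+1) * hf1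

theorem stmt15 (n : ℕ) (hn : 1 ≤ n) :
    15 * (Nat.fib (4*n) : ℚ) =
      12 * ((4:ℚ)^(n:ℤ) - (4:ℚ)^(-(n:ℤ))) +
        11 * ∑ k ∈ Finset.Icc 1 (n-1), ((4:ℚ)^(k:ℤ) - (4:ℚ)^(-(k:ℤ))) * (Nat.fib (4*(n-k)) : ℚ) := by
  obtain ⟨m, rfl⟩ : ∃ m, n = m + 1 := ⟨n - 1, by omega⟩
  have h := main15 m
  simp only [fq, gq, Nat.add_sub_cancel] at h ⊢
  exact h
end

section
/- For every integer n ≥ 1, 15·F_{2n} = 4·(4^n − 4^{−n}) − 5·Σ_{k=1}^{n-1} (4^k − 4^{−k})·F_{2(n−k)}, where F_m denotes the m-th Fibonacci number (identity in the rationals). -/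
noncomputable def aa (k : ℕ) : ℚ := (4:ℚ)^(k:ℤ) - (4:ℚ)^(-(k:ℤ))
def ff (n : ℕ) : ℚ := (Nat.fib (2*n) : ℚ)
noncomputable def SS (n : ℕ) : ℚ := ∑ k ∈ Finset.Icc 1 (n-1), aa k * ff (n-k)

lemma aa_eq (k : ℕ) : aa k = (4:ℚ)^k - ((4:ℚ)^k)⁻¹ := by
  simp [aa, zpow_natCast, zpow_neg]

lemma ff_rec (n : ℕ) : ff (n+2) = 3 * ff (n+1) - ff n := by
  unfold ff
  rw [show 2*(n+2) = 2*n+2+2 from by ring, show 2*(n+1) = 2*n+2 from by ring,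
    Nat.fib_add_two, show 2*n+2+1 = 2*n+1+2 from by ring, Nat.fib_add_two,
    Nat.fib_add_two, show 2*n+1+1 = 2*n+2 from by ring, Nat.fib_add_two]
  push_cast
  ring

lemma aa_rec (n : ℕ) : aa (n+2) = 17/4 * aa (n+1) - aa n := by
  simp only [aa_eq]
  have h : (4:ℚ)^n ≠ 0 := by positivity
  rw [pow_succ, pow_succ]
  field_simp
  ring

lemma SS_alt (n : ℕ) : SS n = ∑ k ∈ Finset.Icc 1 n, aa k * ff (n-k) := by
  cases n with
  | zero => simp [SS]
  | succ m =>
    rw [SS]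
    simp only [Nat.succ_sub_one]
    rw [Finset.sum_Icc_succ_top (by omega : 1 ≤ m+1)]
    simp [ff]

lemma SS_succ (n : ℕ) : SS (n+2) = 3 * SS (n+1) - SS n + aa (n+1) := by
  have h2 : SS (n+2) = ∑ k ∈ Finset.Icc 1 (n+1), aa k * ff (n+2-k) := by
    rw [SS]; norm_num
  rw [h2, Finset.sum_Icc_succ_top (by omega : 1 ≤ n+1)]
  have hcong : ∀ k ∈ Finset.Icc 1 n,
      aa k * ff (n+2-k) = 3*(aa k * ff (n+1-k)) - aa k * ff (n-k) := by
    intro k hk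
    simp only [Finset.mem_Icc] at hk
    have hkey : n+2-k = (n-k)+2 := by omega
    have h1 : n+1-k = (n-k)+1 := by omega
    rw [hkey, h1, ff_rec]
    ring
  rw [Finset.sum_congr rfl hcong, Finset.sum_sub_distrib, ← Finset.mul_sum]
  have e1 : SS (n+1) = ∑ k ∈ Finset.Icc 1 n, aa k * ff (n+1-k) := by
    rw [SS]; norm_num
  have e2 : n+2-(n+1) = 1 := by omega
  have e3 : ff 1 = 1 := by norm_num [ff]
  rw [SS_alt n, ← e1, e2, e3]
  ring

lemma key_s16 : ∀ n : ℕ, 15 * ff (n+1) = 4 * aa (n+1) - 5 * SS (n+1) ∧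
    15 * ff (n+2) = 4 * aa (n+2) - 5 * SS (n+2) := by
  intro n
  induction n with
  | zero =>
    constructor
    · norm_num [SS, ff, aa_eq]
    · have hS : SS 2 = aa 1 * ff 1 := by
        rw [SS]; norm_num
      rw [hS]
      norm_num [ff, aa_eq]
  | succ m ih =>
    refine ⟨ih.2, ?_⟩
    rw [ff_rec, aa_rec, SS_succ]
    have h1 := ih.1
    have h2 := ih.2
    linarith

theorem stmt16 (n : ℕ) (hn : 1 ≤ n) :
    15 * (Nat.fib (2*n) : ℚ) =
      4 * ((4:ℚ)^(n:ℤ) - (4:ℚ)^(-(n:ℤ))) -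
        5 * ∑ k ∈ Finset.Icc 1 (n-1), ((4:ℚ)^(k:ℤ) - (4:ℚ)^(-(k:ℤ))) * (Nat.fib (2*(n-k)) : ℚ) := by
  obtain ⟨m, rfl⟩ : ∃ m, n = m+1 := ⟨n-1, by omega⟩
  have h := (key_s16 m).1
  simpa [ff, aa, SS] using h
end

section
/- For every integer n ≥ 1, 3·L_{2n−2} = 4^n + 8·4^{−n} − Σ_{k=0}^{n-1} (4^k − 4^{−k})·L_{2(n−k−1)}, where L_m denotes the m-th Lucas number (identity in the rationals). -/
lemma lucas_rec (m : ℕ) : lucas (m+2) = lucas (m+1) + lucas m := rfl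

lemma lucasQ (n : ℕ) : (lucas (2*(n+2)) : ℚ) = 3*(lucas (2*(n+1)) : ℚ) - (lucas (2*n) : ℚ) := by
  have h1 : 2*(n+2) = (2*n+2)+2 := by ring
  have h2 : 2*(n+1) = 2*n+2 := by ring
  rw [h1, h2, lucas_rec (2*n+2), lucas_rec (2*n+1), lucas_rec (2*n)]
  push_cast
  ring

lemma Plem (n : ℕ) :
    5 * ∑ k ∈ Finset.range (n+1), (4:ℚ)^k * (lucas (2*(n-k)) : ℚ)
      = 5*4^(n+1) - 4*(lucas (2*(n+1)) : ℚ) + (lucas (2*n) : ℚ) := by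
  induction n with
  | zero => simp [lucas]; norm_num [lucas_rec 0, lucas]
  | succ m ih =>
    rw [Finset.sum_range_succ' (fun k => (4:ℚ)^k * (lucas (2*((m+1)-k)) : ℚ)) (m+1)]
    have h : ∀ i, (m+1) - (i+1) = m - i := fun i => by omega
    simp only [h, Nat.sub_zero, pow_succ, pow_zero, one_mul]
    have : ∑ i ∈ Finset.range (m+1), (4:ℚ)^i * 4 * (lucas (2*(m-i)) : ℚ)
        = 4 * ∑ i ∈ Finset.range (m+1), (4:ℚ)^i * (lucas (2*(m-i)) : ℚ) := by
      rw [Finset.mul_sum]; apply Finset.sum_congr rfl; intros; ring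
    rw [this]
    rw [show 2*(m+1+1) = 2*(m+2) from by ring,
      show (4:ℚ)^m*4*4 = 4*4^(m+1) from by ring]
    have hl := lucasQ m
    linarith [ih]

lemma Qlem (n : ℕ) :
    5 * ∑ k ∈ Finset.range (n+1), ((1:ℚ)/4)^k * (lucas (2*(n-k)) : ℚ)
      = 16*(lucas (2*n) : ℚ) - 4*(lucas (2*(n+1)) : ℚ) - 40*((1:ℚ)/4)^(n+1) := by
  induction n with
  | zero => simp [lucas]; norm_num [lucas_rec 0, lucas]
  | succ m ih =>
    rw [Finset.sum_range_succ' (fun k => ((1:ℚ)/4)^k * (lucas (2*((m+1)-k)) : ℚ)) (m+1)]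
    have h : ∀ i, (m+1) - (i+1) = m - i := fun i => by omega
    simp only [h, Nat.sub_zero, pow_succ, pow_zero, one_mul]
    have : ∑ i ∈ Finset.range (m+1), ((1:ℚ)/4)^i * (1/4) * (lucas (2*(m-i)) : ℚ)
        = (1/4) * ∑ i ∈ Finset.range (m+1), ((1:ℚ)/4)^i * (lucas (2*(m-i)) : ℚ) := by
      rw [Finset.mul_sum]; apply Finset.sum_congr rfl; intros; ring
    rw [this]
    rw [show 2*(m+1+1) = 2*(m+2) from by ring,
      show ((1:ℚ)/4)^m*(1/4)*(1/4) = (1/4)*((1/4):ℚ)^(m+1) from by ring]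
    have hl := lucasQ m
    linarith [ih]

theorem stmt17 (n : ℕ) (hn : 1 ≤ n) :
    3 * (lucas (2*n-2) : ℚ) =
      (4:ℚ)^(n:ℤ) + 8 * (4:ℚ)^(-(n:ℤ)) -
        ∑ k ∈ Finset.range n, ((4:ℚ)^(k:ℤ) - (4:ℚ)^(-(k:ℤ))) * (lucas (2*(n-k-1)) : ℚ) := by
  obtain ⟨m, rfl⟩ : ∃ m, n = m + 1 := ⟨n - 1, by omega⟩
  have hz : ∀ k : ℕ, (4:ℚ)^(-(k:ℤ)) = ((1:ℚ)/4)^k := by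
    intro k
    rw [zpow_neg, zpow_natCast, one_div, inv_pow]
  have hz2 : ∀ k : ℕ, (4:ℚ)^(k:ℤ) = (4:ℚ)^k := fun k => zpow_natCast 4 k
  have hsum : ∑ k ∈ Finset.range (m+1), ((4:ℚ)^(k:ℤ) - (4:ℚ)^(-(k:ℤ))) * (lucas (2*((m+1)-k-1)) : ℚ)
      = (∑ k ∈ Finset.range (m+1), (4:ℚ)^k * (lucas (2*(m-k)) : ℚ))
        - ∑ k ∈ Finset.range (m+1), ((1:ℚ)/4)^k * (lucas (2*(m-k)) : ℚ) := by
    rw [← Finset.sum_sub_distrib]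
    apply Finset.sum_congr rfl
    intro k _
    have : (m+1) - k - 1 = m - k := by omega
    rw [this, hz, hz2]
    ring
  rw [hsum, hz2 (m+1), hz (m+1)]
  have h1 : 2*(m+1) - 2 = 2*m := by omega
  rw [h1]
  have hP := Plem m
  have hQ := Qlem m
  linarith
end

section
/- For every integer n ≥ 0, 11·Σ_{k=1}^{n} F_{4k}·L_{6(n−k)} = 3·L_{6n} − 2·F_{4n+4} + 18·F_{4n}, where F and L denote Fibonacci and Lucas numbers. -/
lemma fib4 (m : ℕ) : Nat.fib (m+4) = 3 * Nat.fib (m+1) + 2 * Nat.fib m := by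
  simp [Nat.fib_add_two]; ring

lemma fib5 (m : ℕ) : Nat.fib (m+5) = 5 * Nat.fib (m+1) + 3 * Nat.fib m := by
  simp [Nat.fib_add_two]; ring

lemma lucas6 (m : ℕ) : lucas (m+6) = 8 * lucas (m+1) + 5 * lucas m := by
  simp [lucas]; ring

lemma lucas7 (m : ℕ) : lucas (m+7) = 13 * lucas (m+1) + 8 * lucas m := by
  simp [lucas]; ring

lemma aux_s18 (n : ℕ) :
    11 * (∑ j ∈ Finset.range n, (Nat.fib (4*(n-j)) : ℤ) * lucas (6*j)) =
      3 * lucas (6*n) - 6 * (Nat.fib (4*n+1) : ℤ) + 14 * (Nat.fib (4*n) : ℤ) ∧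
    11 * (∑ j ∈ Finset.range n, (Nat.fib (4*(n-j)+1) : ℤ) * lucas (6*j)) =
      8 * lucas (6*n+1) - 8 * lucas (6*n) + 8 * (Nat.fib (4*n+1) : ℤ) - 6 * (Nat.fib (4*n) : ℤ) := by
  induction n with
  | zero => simp [lucas]
  | succ n ih =>
    obtain ⟨ih1, ih2⟩ := ih
    have e1 : ∀ j ∈ Finset.range n, (Nat.fib (4*(n+1-j)) : ℤ) * lucas (6*j) =
        3 * ((Nat.fib (4*(n-j)+1) : ℤ) * lucas (6*j)) + 2 * ((Nat.fib (4*(n-j)) : ℤ) * lucas (6*j)) := by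
      intro j hj
      simp only [Finset.mem_range] at hj
      have h : 4*(n+1-j) = 4*(n-j) + 4 := by omega
      rw [h, fib4]; push_cast; ring
    have e2 : ∀ j ∈ Finset.range n, (Nat.fib (4*(n+1-j)+1) : ℤ) * lucas (6*j) =
        5 * ((Nat.fib (4*(n-j)+1) : ℤ) * lucas (6*j)) + 3 * ((Nat.fib (4*(n-j)) : ℤ) * lucas (6*j)) := by
      intro j hj
      simp only [Finset.mem_range] at hj
      have h : 4*(n+1-j)+1 = 4*(n-j) + 5 := by omega
      rw [h, fib5]; push_cast; ring
    rw [Finset.sum_range_succ, Finset.sum_range_succ, Finset.sum_congr rfl e1,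
      Finset.sum_congr rfl e2, Finset.sum_add_distrib, Finset.sum_add_distrib,
      ← Finset.mul_sum, ← Finset.mul_sum, ← Finset.mul_sum, ← Finset.mul_sum]
    have h4 : (Nat.fib (4*(n+1)) : ℤ) = 3 * Nat.fib (4*n+1) + 2 * Nat.fib (4*n) := by
      have : 4*(n+1) = 4*n+4 := by ring
      rw [this, fib4]; push_cast; ring
    have h5 : (Nat.fib (4*(n+1)+1) : ℤ) = 5 * Nat.fib (4*n+1) + 3 * Nat.fib (4*n) := by
      have : 4*(n+1)+1 = 4*n+5 := by ring
      rw [this, fib5]; push_cast; ring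
    have h6 : lucas (6*(n+1)) = 8 * lucas (6*n+1) + 5 * lucas (6*n) := by
      have : 6*(n+1) = 6*n+6 := by ring
      rw [this, lucas6]
    have h7 : lucas (6*(n+1)+1) = 13 * lucas (6*n+1) + 8 * lucas (6*n) := by
      have : 6*(n+1)+1 = 6*n+7 := by ring
      rw [this, lucas7]
    have f4 : (Nat.fib (4*(n+1-n)) : ℤ) = 3 := by
      have : 4*(n+1-n) = 4 := by omega
      rw [this]; norm_num [show Nat.fib 4 = 3 from rfl]
    have f5 : (Nat.fib (4*(n+1-n)+1) : ℤ) = 5 := by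
      have : 4*(n+1-n)+1 = 5 := by omega
      rw [this]; norm_num [show Nat.fib 5 = 5 from rfl]
    constructor
    · rw [h4, h6, f4]; linarith
    · rw [h5, h6, h7, f5]; linarith

theorem stmt18 (n : ℕ) :
    11 * ∑ k ∈ Finset.Icc 1 n, (Nat.fib (4*k) : ℤ) * lucas (6*(n-k)) =
      3 * lucas (6*n) - 2 * (Nat.fib (4*n+4) : ℤ) + 18 * (Nat.fib (4*n) : ℤ) := by
  have hs : ∑ k ∈ Finset.Icc 1 n, (Nat.fib (4*k) : ℤ) * lucas (6*(n-k)) =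
      ∑ j ∈ Finset.range n, (Nat.fib (4*(n-j)) : ℤ) * lucas (6*j) := by
    refine Finset.sum_bij' (i := fun k _ => n - k) (j := fun j _ => n - j) ?_ ?_ ?_ ?_ ?_
    · intro k hk; simp only [Finset.mem_Icc] at hk; simp only [Finset.mem_range]; omega
    · intro j hj; simp only [Finset.mem_range] at hj; simp only [Finset.mem_Icc]; omega
    · intro k hk; simp only [Finset.mem_Icc] at hk; omega
    · intro j hj; simp only [Finset.mem_range] at hj; omega
    · intro k hk; simp only [Finset.mem_Icc] at hk
      have h : n - (n - k) = k := by omega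
      rw [h]
  rw [hs, (aux_s18 n).1]
  have hf : (Nat.fib (4*n+4) : ℤ) = 3 * Nat.fib (4*n+1) + 2 * Nat.fib (4*n) := by
    rw [fib4]; push_cast; ring
  linarith
end

section
/- For every integer n ≥ 0, 11·Σ_{k=0}^{n} L_{4k+2}·F_{6(n−k)+3} = 3·(F_{6n+9} − F_{6n+3}) − 2·(L_{4n+6} − L_{4n+2}), where F and L denote Fibonacci and Lucas numbers. -/
lemma fib12 : ∀ m : ℕ, (Nat.fib (m+12) : ℤ) = 18 * Nat.fib (m+6) - Nat.fib m := by
  intro m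
  induction m using Nat.twoStepInduction with
  | zero => norm_num [Nat.fib]
  | one => norm_num [Nat.fib]
  | more m ih1 ih2 =>
    have h1 : (Nat.fib (m+14) : ℤ) = Nat.fib (m+13) + Nat.fib (m+12) := by
      have := Nat.fib_add_two (n := m+12); push_cast [this]; ring
    have h2 : (Nat.fib (m+8) : ℤ) = Nat.fib (m+7) + Nat.fib (m+6) := by
      have := Nat.fib_add_two (n := m+6); push_cast [this]; ring
    have h3 : (Nat.fib (m+2) : ℤ) = Nat.fib (m+1) + Nat.fib m := by
      have := Nat.fib_add_two (n := m); push_cast [this]; ring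
    have e1 : m+1+12 = m+13 := by ring
    have e2 : m+1+6 = m+7 := by ring
    rw [e1, e2] at ih2
    show (Nat.fib (m+14) : ℤ) = 18 * Nat.fib (m+8) - Nat.fib (m+2)
    linarith

lemma lucas8 : ∀ m : ℕ, lucas (m+8) = 7 * lucas (m+4) - lucas m := by
  intro m
  induction m using Nat.twoStepInduction with
  | zero => norm_num [lucas]
  | one => norm_num [lucas]
  | more m ih1 ih2 =>
    have h1 : lucas (m+10) = lucas (m+9) + lucas (m+8) := rfl
    have h2 : lucas (m+6) = lucas (m+5) + lucas (m+4) := rfl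
    have h3 : lucas (m+2) = lucas (m+1) + lucas m := rfl
    have e1 : m+1+8 = m+9 := by ring
    have e2 : m+1+4 = m+5 := by ring
    rw [e1, e2] at ih2
    show lucas (m+10) = 7 * lucas (m+6) - lucas (m+2)
    linarith

theorem stmt19 (n : ℕ) :
    11 * ∑ k ∈ Finset.range (n+1), lucas (4*k+2) * (Nat.fib (6*(n-k)+3) : ℤ) =
      3 * ((Nat.fib (6*n+9) : ℤ) - (Nat.fib (6*n+3) : ℤ)) - 2 * (lucas (4*n+6) - lucas (4*n+2)) := by
  induction n using Nat.twoStepInduction with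
  | zero => simp [Finset.sum_range_succ]; norm_num [lucas, Nat.fib]
  | one => simp [Finset.sum_range_succ]; norm_num [lucas, Nat.fib]
  | more n ih1 ih2 =>
    set A := ∑ k ∈ Finset.range (n+1), lucas (4*k+2) * (Nat.fib (6*(n-k)+3) : ℤ) with hA
    set B := ∑ k ∈ Finset.range (n+1), lucas (4*k+2) * (Nat.fib (6*(n+1-k)+3) : ℤ) with hB
    -- rewrite the (n+2) sum
    have key : ∀ k ∈ Finset.range (n+1),
        lucas (4*k+2) * (Nat.fib (6*(n+2-k)+3) : ℤ) =
        18 * (lucas (4*k+2) * (Nat.fib (6*(n+1-k)+3) : ℤ))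
          - lucas (4*k+2) * (Nat.fib (6*(n-k)+3) : ℤ) := by
      intro k hk
      have hk' : k ≤ n := by simpa using Nat.lt_succ_iff.mp (Finset.mem_range.mp hk)
      have e2 : 6*(n+2-k)+3 = (6*(n-k)+3) + 12 := by omega
      have e1 : 6*(n+1-k)+3 = (6*(n-k)+3) + 6 := by omega
      rw [e2, e1, fib12 (6*(n-k)+3)]
      ring
    have hsum : ∑ k ∈ Finset.range (n+1), lucas (4*k+2) * (Nat.fib (6*(n+2-k)+3) : ℤ)
        = 18 * B - A := by
      rw [Finset.sum_congr rfl key, Finset.sum_sub_distrib, ← Finset.mul_sum]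
    have split2 : ∑ k ∈ Finset.range (n+3), lucas (4*k+2) * (Nat.fib (6*(n+2-k)+3) : ℤ)
        = (18 * B - A) + lucas (4*(n+1)+2) * (Nat.fib (6*(n+2-(n+1))+3) : ℤ)
          + lucas (4*(n+2)+2) * (Nat.fib (6*(n+2-(n+2))+3) : ℤ) := by
      rw [show n+3 = (n+2)+1 from rfl, Finset.sum_range_succ, Finset.sum_range_succ, hsum]
    have splitB : ∑ k ∈ Finset.range (n+2), lucas (4*k+2) * (Nat.fib (6*(n+1-k)+3) : ℤ)
        = B + lucas (4*(n+1)+2) * (Nat.fib (6*(n+1-(n+1))+3) : ℤ) := by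
      rw [Finset.sum_range_succ]
    rw [splitB] at ih2
    rw [show n+2+1 = n+3 from rfl, split2]
    -- simplify small indices
    have s1 : n+2-(n+1) = 1 := by omega
    have s2 : n+2-(n+2) = 0 := by omega
    have s3 : n+1-(n+1) = 0 := by omega
    rw [s1, s2] ; rw [s3] at ih2
    have v3 : (Nat.fib (6*0+3) : ℤ) = 2 := by norm_num
    have v9 : (Nat.fib (6*1+3) : ℤ) = 34 := by norm_num
    rw [v9, v3] ; rw [v3] at ih2
    -- fib recurrences for RHS
    have f1 : (Nat.fib (6*(n+2)+9) : ℤ) = 18 * Nat.fib (6*(n+1)+9) - Nat.fib (6*n+9) := by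
      have e : 6*(n+2)+9 = (6*n+9)+12 := by ring
      have e' : 6*(n+1)+9 = (6*n+9)+6 := by ring
      rw [e, e', fib12]
    have f2 : (Nat.fib (6*(n+2)+3) : ℤ) = 18 * Nat.fib (6*(n+1)+3) - Nat.fib (6*n+3) := by
      have e : 6*(n+2)+3 = (6*n+3)+12 := by ring
      have e' : 6*(n+1)+3 = (6*n+3)+6 := by ring
      rw [e, e', fib12]
    -- lucas recurrences
    have l1 : lucas (4*(n+2)+6) = 7 * lucas (4*(n+1)+6) - lucas (4*n+6) := by
      have e : 4*(n+2)+6 = (4*n+6)+8 := by ring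
      have e' : 4*(n+1)+6 = (4*n+6)+4 := by ring
      rw [e, e', lucas8]
    have l2 : lucas (4*(n+2)+2) = 7 * lucas (4*(n+1)+2) - lucas (4*n+2) := by
      have e : 4*(n+2)+2 = (4*n+2)+8 := by ring
      have e' : 4*(n+1)+2 = (4*n+2)+4 := by ring
      rw [e, e', lucas8]
    have l3 : lucas (4*(n+1)+6) = 7 * lucas (4*n+6) - lucas (4*n+2) := by
      have e : 4*(n+1)+6 = (4*n+2)+8 := by ring
      have e' : 4*n+6 = (4*n+2)+4 := by ring
      rw [e, e', lucas8]
    have l4 : lucas (4*(n+1)+2 + 4) = lucas (4*(n+1)+6) := by norm_num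
    have l5 : lucas (4*(n+1)+2) = lucas (4*n+6) := congrArg lucas (by ring)
    rw [f1, f2, l1, l2, l3]
    linarith [l3, l5]
end
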